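/- For all integers p, q, r, the Laurent polynomial (T + 2 + T⁻¹) divides (T + 1 + T⁻¹)·(−T^{−2(p+q+r+2)} − T^{−2(p+q+r+1)} + T^{−2(p+q+1)} + T^{−2(q+r+1)} + T^{−2(r+p+1)}) + 1 in the ring of Laurent polynomials ℤ[T, T⁻¹]. -/

import Mathlib

open LaurentPolynomial

private lemma h1_aux : (T (-1) * T 1 : LaurentPolynomial ℤ) = 1 := by
  rw [← T_add]; norm_num [T_zero]

private lemma even_dvd : ∀ a : ℤ, (T 1 + 1 : LaurentPolynomial ℤ) ∣ T (2 * a) - 1 := by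
  intro a
  induction a using Int.induction_on with
  | zero => simp [T_zero]
  | succ a ih =>
    obtain ⟨w, hw⟩ := ih
    refine ⟨T 1 * T 1 * w + T 1 - 1, ?_⟩
    rw [show (2 * (a + 1 : ℤ)) = 1 + 1 + 2 * a by ring, T_add, T_add]
    linear_combination (T 1 * T 1) * hw
  | pred a ih =>
    obtain ⟨w, hw⟩ := ih
    refine ⟨T (-1) * T (-1) * w + (T (-1) - 1) * T (-1), ?_⟩
    rw [show (2 * (-a - 1 : ℤ)) = -1 + (-1 + 2 * -a) by ring, T_add, T_add]
    linear_combination T (-1) * T (-1) * hw + (1 - T (-1)) * h1_aux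

private lemma step_dvd (a : ℤ) :
    (T 1 + 2 + T (-1) : LaurentPolynomial ℤ) ∣
      T (2 * a + 2) - T (2 * a) + T 1 - T (-1) := by
  obtain ⟨w, hw⟩ := even_dvd a
  -- (s+1)^2 divides, with witness q; then D * (T 1 * q) = (s+1)^2 q
  refine ⟨T 1 * ((T 1 - 1) * T (-1) + (T 1 - 1) * w), ?_⟩
  rw [show (2 * a + 2 : ℤ) = 1 + (1 + 2 * a) by ring, T_add, T_add]
  linear_combination (T 1 * T 1 - 1) * hw +
    (-(T 1 * T 1) - T 1 + 1 - T 1 * T (-1) + T (-1) - T 1 * w + w) * h1_aux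

private lemma key : ∀ a : ℤ,
    (T 1 + 2 + T (-1) : LaurentPolynomial ℤ) ∣
      T (2 * a) - 1 + (a : LaurentPolynomial ℤ) * (T 1 - T (-1)) := by
  intro a
  induction a using Int.induction_on with
  | zero => simp [T_zero]
  | succ a ih =>
    have h := dvd_add ih (step_dvd a)
    have e : (T (2 * ((a : ℤ) + 1)) - 1 + (((a : ℤ) + 1 : ℤ) : LaurentPolynomial ℤ) *
        (T 1 - T (-1))) =
        (T (2 * (a : ℤ)) - 1 + ((a : ℤ) : LaurentPolynomial ℤ) * (T 1 - T (-1))) +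
        (T (2 * (a : ℤ) + 2) - T (2 * (a : ℤ)) + T 1 - T (-1)) := by
      rw [show (2 * ((a : ℤ) + 1)) = 2 * (a : ℤ) + 2 by ring]
      push_cast
      ring
    rwa [e]
  | pred a ih =>
    have h := dvd_sub ih (step_dvd (-(a : ℤ) - 1))
    have e : (T (2 * (-(a : ℤ) - 1)) - 1 + ((-(a : ℤ) - 1 : ℤ) : LaurentPolynomial ℤ) *
        (T 1 - T (-1))) =
        (T (2 * (-(a : ℤ))) - 1 + ((-(a : ℤ) : ℤ) : LaurentPolynomial ℤ) * (T 1 - T (-1))) -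
        (T (2 * (-(a : ℤ) - 1) + 2) - T (2 * (-(a : ℤ) - 1)) + T 1 - T (-1)) := by
      rw [show (2 * (-(a : ℤ) - 1) + 2) = 2 * (-(a : ℤ)) by ring]
      push_cast
      ring
    rwa [e]

theorem stmt_1 (p q r : ℤ) :
    (T 1 + 2 + T (-1) : LaurentPolynomial ℤ) ∣
      (T 1 + 1 + T (-1)) *
        (-(T (-2 * (p + q + r + 2))) - T (-2 * (p + q + r + 1)) +
          T (-2 * (p + q + 1)) + T (-2 * (q + r + 1)) + T (-2 * (r + p + 1))) + 1 := by
  obtain ⟨c₁, h₁⟩ := key (-(p + q + r + 2))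
  obtain ⟨c₂, h₂⟩ := key (-(p + q + r + 1))
  obtain ⟨c₃, h₃⟩ := key (-(p + q + 1))
  obtain ⟨c₄, h₄⟩ := key (-(q + r + 1))
  obtain ⟨c₅, h₅⟩ := key (-(r + p + 1))
  rw [show (-2 * (p + q + r + 2) : ℤ) = 2 * (-(p + q + r + 2)) by ring,
      show (-2 * (p + q + r + 1) : ℤ) = 2 * (-(p + q + r + 1)) by ring,
      show (-2 * (p + q + 1) : ℤ) = 2 * (-(p + q + 1)) by ring,
      show (-2 * (q + r + 1) : ℤ) = 2 * (-(q + r + 1)) by ring,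
      show (-2 * (r + p + 1) : ℤ) = 2 * (-(r + p + 1)) by ring]
  refine ⟨1 + (T 1 + 1 + T (-1)) * (-c₁ - c₂ + c₃ + c₄ + c₅), ?_⟩
  push_cast at h₁ h₂ h₃ h₄ h₅
  linear_combination (-(T 1 + 1 + T (-1))) * h₁ + (-(T 1 + 1 + T (-1))) * h₂ +
    (T 1 + 1 + T (-1)) * h₃ + (T 1 + 1 + T (-1)) * h₄ + (T 1 + 1 + T (-1)) * h₅
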